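/- Let G be a countable group. The conjugacy relation E = {(φ, ψ) ∈ Rep_min(G) × Rep_min(G) : there exists f ∈ Homeo₀(ℝ) with f.φ = ψ} is an F_σ subset (a countable union of closed sets) of Rep_min(G) × Rep_min(G), where Rep_min(G) carries the topology of pointwise convergence. -/

import Mathlib

open Topology Filter

/-!  `ℝ ≃o ℝ` is the group `Homeo₀(ℝ)` of orientation-preserving homeomorphisms of the
line (order isomorphisms of `ℝ`).  An action of a group `G` on the line is a group
homomorphism `G →* (ℝ ≃o ℝ)`. -/

/-- The underlying map of an action, as a point of the function space `G → ℝ → ℝ`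
(equipped with the product topology of pointwise convergence and its Borel σ-algebra). -/
def actMap {G : Type*} [Group G] (φ : G →* (ℝ ≃o ℝ)) : G → ℝ → ℝ := fun g => ⇑(φ g)

/-- An action is minimal if every orbit is dense. -/
def IsMinimalAction {G : Type*} [Group G] (φ : G →* (ℝ ≃o ℝ)) : Prop :=
  ∀ x : ℝ, Dense {y : ℝ | ∃ g : G, φ g x = y}

/-- Conjugation of (the underlying map of) an action by `f ∈ Homeo₀(ℝ)`. -/
def conjFun {G : Type*} (f : ℝ ≃o ℝ) (F : G → ℝ → ℝ) : G → ℝ → ℝ :=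
  fun g x => f (F g (f.symm x))

/-- The space of minimal actions of `G` on the line, as a subset of the function
space `G → ℝ → ℝ`. -/
def RepMin (G : Type*) [Group G] : Set (G → ℝ → ℝ) :=
  {F | ∃ φ : G →* (ℝ ≃o ℝ), IsMinimalAction φ ∧ F = actMap φ}

/-- `G` belongs to the class `𝒞`: the conjugacy relation on `RepMin G` is smooth, i.e.
there is a Borel map to `ℝ` whose fibers are exactly the conjugacy classes. -/
def ClassC (G : Type*) [Group G] : Prop :=
  ∃ r : (RepMin G) → ℝ, Measurable r ∧
    ∀ φ ψ : RepMin G, (r φ = r ψ ↔ ∃ f : ℝ ≃o ℝ, conjFun f (φ : G → ℝ → ℝ) = (ψ : G → ℝ → ℝ))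

/-- The conjugacy (orbit equivalence) relation on the space of minimal actions. -/
def EminSet (G : Type*) [Group G] : Set (↥(RepMin G) × ↥(RepMin G)) :=
  {p | ∃ f : ℝ ≃o ℝ, conjFun f (p.1 : G → ℝ → ℝ) = (p.2 : G → ℝ → ℝ)}

section Aux

variable {G : Type*} [Group G]

lemma orbit_lt (φ : G →* (ℝ ≃o ℝ)) (hφ : IsMinimalAction φ) (x y : ℝ) :
    ∃ k : G, φ k x < y := by
  obtain ⟨z, hz1, hz2⟩ := (hφ x).inter_open_nonempty (Set.Iio y) isOpen_Iio ⟨y - 1, by simp⟩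
  obtain ⟨k, hk⟩ := hz2
  exact ⟨k, hk ▸ hz1⟩

lemma orbit_gt (φ : G →* (ℝ ≃o ℝ)) (hφ : IsMinimalAction φ) (x y : ℝ) :
    ∃ k : G, y < φ k x := by
  obtain ⟨z, hz1, hz2⟩ := (hφ x).inter_open_nonempty (Set.Ioi y) isOpen_Ioi ⟨y + 1, by simp⟩
  obtain ⟨k, hk⟩ := hz2
  exact ⟨k, hk ▸ hz1⟩

lemma orbit_mem_open (φ : G →* (ℝ ≃o ℝ)) (hφ : IsMinimalAction φ) (x : ℝ) {U : Set ℝ}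
    (hU : IsOpen U) (hUne : U.Nonempty) : ∃ k : G, φ k x ∈ U := by
  obtain ⟨z, hz1, hz2⟩ := (hφ x).inter_open_nonempty U hU hUne
  obtain ⟨k, hk⟩ := hz2
  exact ⟨k, hk ▸ hz1⟩

/-- The key dynamical lemma: for minimal actions, the existence of a point `t` whose
`ψ`-orbit is ordered compatibly with the `φ`-orbit of `0` yields a conjugacy. -/
lemma conj_of_cond (φ ψ : G →* (ℝ ≃o ℝ)) (hφ : IsMinimalAction φ)
    (hψ : IsMinimalAction ψ) (t : ℝ)
    (H : ∀ g h : G, φ g 0 < φ h 0 → ψ g t ≤ ψ h t) :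
    ∃ f : ℝ ≃o ℝ, ∀ g x, f (φ g x) = ψ g (f x) := by
  set S : ℝ → Set ℝ := fun y => (fun k : G => ψ k t) '' {k | φ k 0 < y} with hS
  have hne : ∀ y, (S y).Nonempty := by
    intro y
    obtain ⟨k, hk⟩ := orbit_lt φ hφ 0 y
    exact ⟨ψ k t, k, hk, rfl⟩
  have hbdd : ∀ y, BddAbove (S y) := by
    intro y
    obtain ⟨h, hh⟩ := orbit_gt φ hφ 0 y
    refine ⟨ψ h t, ?_⟩
    rintro z ⟨k, hk, rfl⟩
    exact H k h (hk.trans hh)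
  set f : ℝ → ℝ := fun y => sSup (S y) with hf
  have hmono : Monotone f := by
    intro y y' hyy'
    exact csSup_le_csSup (hbdd y') (hne y) (Set.image_mono fun k hk => lt_of_lt_of_le hk hyy')
  have hub : ∀ (k : G) (y : ℝ), φ k 0 < y → ψ k t ≤ f y := by
    intro k y hk
    exact le_csSup (hbdd y) ⟨k, hk, rfl⟩
  have hlb : ∀ (k : G) (y : ℝ), y ≤ φ k 0 → f y ≤ ψ k t := by
    intro k y hk
    refine csSup_le (hne y) ?_
    rintro z ⟨k', hk', rfl⟩
    exact H k' k (lt_of_lt_of_le hk' hk)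
  have happφ : ∀ (a b : G) (x : ℝ), φ (a * b) x = φ a (φ b x) := by
    intro a b x; rw [map_mul]; rfl
  have happψ : ∀ (a b : G) (x : ℝ), ψ (a * b) x = ψ a (ψ b x) := by
    intro a b x; rw [map_mul]; rfl
  have hSequiv : ∀ (g : G) (y : ℝ), S (φ g y) = (ψ g : ℝ → ℝ) '' S y := by
    intro g y
    ext z
    constructor
    · rintro ⟨k, hk, rfl⟩
      refine ⟨ψ (g⁻¹ * k) t, ⟨g⁻¹ * k, ?_, rfl⟩, ?_⟩
      · have h1 : φ (g⁻¹ * k) 0 < φ (g⁻¹ * g) y := by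
          rw [happφ, happφ]; exact (φ g⁻¹).strictMono hk
        simpa using h1
      · show ψ g (ψ (g⁻¹ * k) t) = ψ k t
        rw [← happψ, mul_inv_cancel_left]
    · rintro ⟨w, ⟨k, hk, rfl⟩, rfl⟩
      refine ⟨g * k, ?_, ?_⟩
      · show φ (g * k) 0 < φ g y
        rw [happφ]; exact (φ g).strictMono hk
      · show ψ (g * k) t = ψ g (ψ k t)
        rw [happψ]
  have hequiv : ∀ (g : G) (y : ℝ), f (φ g y) = ψ g (f y) := by
    intro g y
    have h1 : ψ g (sSup (S y)) = sSup ((ψ g : ℝ → ℝ) '' S y) := by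
      rw [OrderIso.map_csSup (ψ g) (hne y) (hbdd y), sSup_image']
    rw [hf]
    simp only
    rw [hSequiv g y, ← h1]
  -- dense range
  have hrange : DenseRange f := by
    have hsub : {y : ℝ | ∃ g : G, ψ g (f 0) = y} ⊆ Set.range f := by
      rintro z ⟨g, rfl⟩
      exact ⟨φ g 0, hequiv g 0⟩
    exact Dense.mono hsub (hψ (f 0))
  have hcont : Continuous f := hmono.continuous_of_denseRange hrange
  have hsurj : Function.Surjective f := by
    intro z
    obtain ⟨h', hh'⟩ := orbit_lt ψ hψ t z
    obtain ⟨h, hh⟩ := orbit_gt ψ hψ t z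
    have h1 : f (φ h' 0) ≤ z := (hlb h' _ le_rfl).trans hh'.le
    have h2 : z ≤ f (φ h 0 + 1) := le_trans hh.le (hub h _ (by linarith))
    exact intermediate_value_univ (φ h' 0) (φ h 0 + 1) hcont ⟨h1, h2⟩
  have hkey : ∀ x1 x2 : ℝ, x1 < x2 → f x1 ≠ f x2 := by
    intro x1 x2 hx hc
    set c := f x1 with hcdef
    set P : Set ℝ := f ⁻¹' {c} with hP
    have hx1P : x1 ∈ P := rfl
    have hx2P : x2 ∈ P := by simp [hP, ← hc]
    have hPne : P.Nonempty := ⟨x1, hx1P⟩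
    obtain ⟨a, ha⟩ := hsurj (c - 1)
    obtain ⟨b, hb⟩ := hsurj (c + 1)
    have hPbb : BddBelow P := by
      refine ⟨a, fun p hp => ?_⟩
      by_contra hpa
      push_neg at hpa
      have := hmono hpa.le
      rw [ha, hp] at this
      linarith [Set.mem_preimage.mp hp, this]
    have hPba : BddAbove P := by
      refine ⟨b, fun p hp => ?_⟩
      by_contra hpb
      push_neg at hpb
      have := hmono hpb.le
      rw [hb] at this
      have hpc : f p = c := hp
      linarith
    have hPclosed : IsClosed P := IsClosed.preimage hcont isClosed_singleton
    set p := sInf P with hpdef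
    set q := sSup P with hqdef
    have hpP : p ∈ P := hPclosed.csInf_mem hPne hPbb
    have hpq : p < q := lt_of_le_of_lt (csInf_le hPbb hx1P) (lt_of_lt_of_le hx (le_csSup hPba hx2P))
    have hIoo : Set.Ioo p q ⊆ P := by
      intro z hz
      obtain ⟨u, hu, huz⟩ := exists_lt_of_csInf_lt hPne hz.1
      obtain ⟨v, hv, hzv⟩ := exists_lt_of_lt_csSup hPne hz.2
      have h1 : f u ≤ f z := hmono huz.le
      have h2 : f z ≤ f v := hmono hzv.le
      have hu' : f u = c := hu
      have hv' : f v = c := hv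
      have : f z = c := le_antisymm (hv' ▸ h2) (hu' ▸ h1)
      exact this
    obtain ⟨γ, hγ⟩ := orbit_mem_open φ hφ p isOpen_Ioo (Set.nonempty_Ioo.mpr hpq)
    have hfp : f p = c := hpP
    have hψγc : ψ γ c = c := by
      have h1 : f (φ γ p) = c := hIoo hγ
      have h2 : f (φ γ p) = ψ γ c := by rw [hequiv, hfp]
      rw [← h2]; exact h1
    have hPim : (φ γ : ℝ → ℝ) '' P = P := by
      ext z
      constructor
      · rintro ⟨w, hw, rfl⟩
        have hw' : f w = c := hw
        have : f (φ γ w) = ψ γ c := by rw [hequiv, hw']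
        simp [hP, Set.mem_preimage, this, hψγc]
      · intro hz
        have hz' : f z = c := hz
        refine ⟨(φ γ).symm z, ?_, by simp⟩
        have h3 : f ((φ γ).symm z) = c := by
          have h4 : ψ γ (f ((φ γ).symm z)) = f (φ γ ((φ γ).symm z)) := (hequiv γ _).symm
          rw [OrderIso.apply_symm_apply, hz', ← hψγc] at h4
          exact (ψ γ).injective h4
        exact h3
    have hfix : φ γ p = p := by
      have h5 : φ γ (sInf P) = sInf ((φ γ : ℝ → ℝ) '' P) := by
        rw [OrderIso.map_csInf (φ γ) hPne hPbb, sInf_image']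
      rw [hpdef] at *
      rw [h5, hPim]
    rw [hfix] at hγ
    exact lt_irrefl p hγ.1
  have hinj : Function.Injective f := by
    intro u v huv
    by_contra hne'
    rcases lt_or_gt_of_ne hne' with h | h
    · exact hkey u v h huv
    · exact hkey v u h huv.symm
  have hstrict : StrictMono f := hmono.strictMono_of_injective hinj
  refine ⟨StrictMono.orderIsoOfSurjective f hstrict hsurj, fun g x => ?_⟩
  have : ⇑(StrictMono.orderIsoOfSurjective f hstrict hsurj) = f :=
    StrictMono.coe_orderIsoOfSurjective f hstrict hsurj
  rw [this]
  exact hequiv g x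

end Aux

theorem stmt2 (G : Type*) [Group G] [Countable G] :
    ∃ C : ℕ → Set (↥(RepMin G) × ↥(RepMin G)),
      (∀ n, IsClosed (C n)) ∧ EminSet G = ⋃ n, C n := by
  classical
  set X := ↥(RepMin G) with hX
  set Q : (X × X) → ℝ → Prop := fun P t =>
    ∀ (g h : G) (q : ℚ), ¬((P.1 : G → ℝ → ℝ) g 0 < (P.1 : G → ℝ → ℝ) h 0 ∧
      t < (P.2 : G → ℝ → ℝ) h⁻¹ q ∧ (P.2 : G → ℝ → ℝ) g⁻¹ q < t) with hQ
  refine ⟨fun n => {P : X × X | ∃ t : ℝ, t ∈ Set.Icc (-(n : ℝ)) n ∧ Q P t}, ?_, ?_⟩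
  · -- closedness
    intro n
    show IsClosed {P : X × X | ∃ t : ℝ, t ∈ Set.Icc (-(n : ℝ)) n ∧ Q P t}
    have himg : {P : X × X | ∃ t : ℝ, t ∈ Set.Icc (-(n : ℝ)) n ∧ Q P t} =
        Prod.fst '' {z : (X × X) × (Set.Icc (-(n : ℝ)) (n : ℝ)) | Q z.1 (z.2 : ℝ)} := by
      ext P
      constructor
      · rintro ⟨t, ht, hq⟩
        exact ⟨(P, ⟨t, ht⟩), hq, rfl⟩
      · rintro ⟨z, hz, rfl⟩
        exact ⟨(z.2 : ℝ), z.2.2, hz⟩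
    rw [himg]
    haveI : CompactSpace (Set.Icc (-(n : ℝ)) (n : ℝ)) := by infer_instance
    apply isClosedMap_fst_of_compactSpace
    have hsetEq : {z : (X × X) × (Set.Icc (-(n : ℝ)) (n : ℝ)) | Q z.1 (z.2 : ℝ)} =
        ⋂ (g : G), ⋂ (h : G), ⋂ (q : ℚ),
          {z : (X × X) × (Set.Icc (-(n : ℝ)) (n : ℝ)) |
            ¬((z.1.1 : G → ℝ → ℝ) g 0 < (z.1.1 : G → ℝ → ℝ) h 0 ∧
              (z.2 : ℝ) < (z.1.2 : G → ℝ → ℝ) h⁻¹ q ∧ (z.1.2 : G → ℝ → ℝ) g⁻¹ q < (z.2 : ℝ))} := by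
      ext z
      simp only [hQ, Set.mem_setOf_eq, Set.mem_iInter]
    rw [hsetEq]
    refine isClosed_iInter fun g => isClosed_iInter fun h => isClosed_iInter fun q => ?_
    have heval : ∀ (a : G) (x : ℝ), Continuous fun F : G → ℝ → ℝ => F a x := by
      intro a x
      exact (continuous_apply x).comp (continuous_apply a)
    have hv1 : Continuous fun z : (X × X) × (Set.Icc (-(n : ℝ)) (n : ℝ)) =>
        (z.1.1 : G → ℝ → ℝ) :=
      continuous_subtype_val.comp (continuous_fst.comp continuous_fst)
    have hv2 : Continuous fun z : (X × X) × (Set.Icc (-(n : ℝ)) (n : ℝ)) =>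
        (z.1.2 : G → ℝ → ℝ) :=
      continuous_subtype_val.comp (continuous_snd.comp continuous_fst)
    have hc1 : Continuous fun z : (X × X) × (Set.Icc (-(n : ℝ)) (n : ℝ)) =>
        (z.1.1 : G → ℝ → ℝ) g 0 := (heval g 0).comp hv1
    have hc2 : Continuous fun z : (X × X) × (Set.Icc (-(n : ℝ)) (n : ℝ)) =>
        (z.1.1 : G → ℝ → ℝ) h 0 := (heval h 0).comp hv1
    have hc3 : Continuous fun z : (X × X) × (Set.Icc (-(n : ℝ)) (n : ℝ)) =>
        (z.1.2 : G → ℝ → ℝ) h⁻¹ q := (heval h⁻¹ (q:ℝ)).comp hv2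
    have hc4 : Continuous fun z : (X × X) × (Set.Icc (-(n : ℝ)) (n : ℝ)) =>
        (z.1.2 : G → ℝ → ℝ) g⁻¹ q := (heval g⁻¹ (q:ℝ)).comp hv2
    have hc5 : Continuous fun z : (X × X) × (Set.Icc (-(n : ℝ)) (n : ℝ)) => (z.2 : ℝ) :=
      continuous_subtype_val.comp continuous_snd
    have hopen : IsOpen {z : (X × X) × (Set.Icc (-(n : ℝ)) (n : ℝ)) |
        ((z.1.1 : G → ℝ → ℝ) g 0 < (z.1.1 : G → ℝ → ℝ) h 0 ∧
          (z.2 : ℝ) < (z.1.2 : G → ℝ → ℝ) h⁻¹ q ∧ (z.1.2 : G → ℝ → ℝ) g⁻¹ q < (z.2 : ℝ))} := by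
      exact ((isOpen_lt hc1 hc2).inter ((isOpen_lt hc5 hc3).inter (isOpen_lt hc4 hc5)))
    have : {z : (X × X) × (Set.Icc (-(n : ℝ)) (n : ℝ)) |
        ¬((z.1.1 : G → ℝ → ℝ) g 0 < (z.1.1 : G → ℝ → ℝ) h 0 ∧
          (z.2 : ℝ) < (z.1.2 : G → ℝ → ℝ) h⁻¹ q ∧ (z.1.2 : G → ℝ → ℝ) g⁻¹ q < (z.2 : ℝ))} =
        {z : (X × X) × (Set.Icc (-(n : ℝ)) (n : ℝ)) |
        ((z.1.1 : G → ℝ → ℝ) g 0 < (z.1.1 : G → ℝ → ℝ) h 0 ∧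
          (z.2 : ℝ) < (z.1.2 : G → ℝ → ℝ) h⁻¹ q ∧ (z.1.2 : G → ℝ → ℝ) g⁻¹ q < (z.2 : ℝ))}ᶜ := rfl
    rw [this, isClosed_compl_iff]
    exact hopen
  · -- set equality
    ext P
    simp only [Set.mem_iUnion, Set.mem_setOf_eq]
    constructor
    · rintro ⟨f, hf⟩
      obtain ⟨φ, hφmin, hφeq⟩ := P.1.2
      obtain ⟨ψ, hψmin, hψeq⟩ := P.2.2
      set t := f 0 with ht
      refine ⟨⌈|t|⌉₊, t, ?_, ?_⟩
      · have : |t| ≤ (⌈|t|⌉₊ : ℝ) := Nat.le_ceil _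
        constructor
        · linarith [neg_abs_le t]
        · linarith [le_abs_self t]
      · intro g h q hcontr
        obtain ⟨h1, h2, h3⟩ := hcontr
        rw [hφeq] at h1
        rw [hψeq] at h2 h3
        -- hf gives : ∀ g x, f ((φ g) (f.symm x)) = ψ g x  (as actMaps)
        have hconj : ∀ (g : G) (y : ℝ), f (φ g y) = ψ g (f y) := by
          intro g y
          have := congrFun (congrFun hf g) (f y)
          rw [hφeq, hψeq] at this
          simpa [conjFun, actMap] using this
        have hg : ψ g t = f (φ g 0) := (hconj g 0).symm
        have hh : ψ h t = f (φ h 0) := (hconj h 0).symm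
        have hinv : ∀ (a : G) (x : ℝ), actMap ψ a⁻¹ x = (ψ a).symm x := by
          intro a x
          show ψ a⁻¹ x = (ψ a).symm x
          rw [map_inv]; rfl
        rw [hinv] at h2 h3
        have h2' : ψ h t < q := by
          have := (ψ h).strictMono h2
          rwa [OrderIso.apply_symm_apply] at this
        have h3' : (q : ℝ) < ψ g t := by
          have := (ψ g).strictMono h3
          rwa [OrderIso.apply_symm_apply] at this
        have hlt : ψ g t < ψ h t := by
          rw [hg, hh]; exact f.strictMono ((hφeq ▸ h1 : actMap φ g 0 < actMap φ h 0))
        linarith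
    · rintro ⟨n, t, htI, hq⟩
      obtain ⟨φ, hφmin, hφeq⟩ := P.1.2
      obtain ⟨ψ, hψmin, hψeq⟩ := P.2.2
      have H : ∀ g h : G, φ g 0 < φ h 0 → ψ g t ≤ ψ h t := by
        intro g h hgh
        by_contra hlt
        push_neg at hlt
        obtain ⟨q, hq1, hq2⟩ := exists_rat_btwn hlt
        refine hq g h q ⟨?_, ?_, ?_⟩
        · rw [hφeq]; exact hgh
        · rw [hψeq]
          show t < ψ h⁻¹ q
          rw [map_inv]
          have : (ψ h).symm (ψ h t) < (ψ h).symm q := (ψ h).symm.strictMono hq1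
          rwa [OrderIso.symm_apply_apply] at this
        · rw [hψeq]
          show ψ g⁻¹ q < t
          rw [map_inv]
          have : (ψ g).symm (q : ℝ) < (ψ g).symm (ψ g t) := (ψ g).symm.strictMono hq2
          rwa [OrderIso.symm_apply_apply] at this
      obtain ⟨f, hconj⟩ := conj_of_cond φ ψ hφmin hψmin t H
      refine ⟨f, ?_⟩
      rw [hφeq, hψeq]
      funext g x
      show f (φ g (f.symm x)) = ψ g x
      rw [hconj g (f.symm x), OrderIso.apply_symm_apply]
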